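/- Let S ⊆ X be a closed set that is upward closed along the fibers of Ξ: whenever x ∈ S and a ≥ α(x), the point h⁻¹(a, Ξ(x)) belongs to S. Define f* : Y → [0,∞] by f*(ξ) := inf{ α(x) : x ∈ S, Ξ(x) = ξ }, with the convention inf ∅ := ∞. Then S = { x ∈ X : f*(Ξ(x)) ≤ α(x) }, i.e. S is exactly the epigraph of the boundary function f* in the coordinates (α, Ξ). -/

import Mathlib

open scoped ENNReal NNReal

/-- Let `X`, `Y` be topological spaces and `h : X → (0,∞) × Y` a
homeomorphism; write `α(x)` and `Ξ(x)` for the two components of `h x`.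
Let `S ⊆ X` be a closed set that is upward closed along the fibers of `Ξ`:
whenever `x ∈ S` and `a ≥ α(x)`, the point `h⁻¹(a, Ξ(x))` belongs to `S`.
Define `f* : Y → [0,∞]` by `f*(ξ) := inf{ α(x) : x ∈ S, Ξ(x) = ξ }` (with `inf ∅ := ∞`).
Then `S = { x ∈ X : f*(Ξ(x)) ≤ α(x) }`, i.e. `S` is exactly the epigraph of the
boundary function `f*` in the coordinates `(α, Ξ)`. -/
theorem stmt_11 {X Y : Type*} [TopologicalSpace X] [TopologicalSpace Y]
    (h : X ≃ₜ ↥(Set.Ioi (0 : ℝ)) × Y)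
    (α : X → ℝ) (hα : ∀ x, α x = ((h x).1 : ℝ))
    (Ξ : X → Y) (hΞ : ∀ x, Ξ x = (h x).2)
    (S : Set X) (hS : IsClosed S)
    (hup : ∀ x ∈ S, ∀ a : ℝ, ∀ ha : 0 < a, α x ≤ a →
      h.symm (⟨a, ha⟩, Ξ x) ∈ S)
    (fstar : Y → ℝ≥0∞)
    (hf : ∀ ξ, fstar ξ = sInf ((fun x => ENNReal.ofReal (α x)) '' {x | x ∈ S ∧ Ξ x = ξ})) :
    S = {x | fstar (Ξ x) ≤ ENNReal.ofReal (α x)} := by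

  ext x
  simp only [Set.mem_setOf_eq]
  constructor
  · intro hx
    rw [hf]
    exact sInf_le ⟨x, ⟨hx, rfl⟩, rfl⟩
  · intro hx
    have hαpos : 0 < α x := by rw [hα]; exact (h x).1.2
    -- sequence a n = α x + 1/(n+1)
    set u : ℕ → ℝ := fun n => α x + 1 / (n + 1) with hu
    have hupos : ∀ n, 0 < u n := fun n => by positivity
    have hmem : ∀ n, h.symm (⟨u n, hupos n⟩, Ξ x) ∈ S := by
      intro n
      have hlt : fstar (Ξ x) < ENNReal.ofReal (u n) := by
        refine lt_of_le_of_lt hx ?_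
        rw [ENNReal.ofReal_lt_ofReal_iff (hupos n)]
        simp [hu]
        positivity
      rw [hf] at hlt
      obtain ⟨b, ⟨x', ⟨hx'S, hx'Ξ⟩, rfl⟩, hblt⟩ := sInf_lt_iff.mp hlt
      have hx'pos : 0 < α x' := by rw [hα]; exact (h x').1.2
      have : α x' < u n := by
        rwa [ENNReal.ofReal_lt_ofReal_iff_of_nonneg hx'pos.le] at hblt
      have := hup x' hx'S (u n) (hupos n) this.le
      rwa [hx'Ξ] at this
    have h1 : Filter.Tendsto u Filter.atTop (nhds (α x)) := by
      have : Filter.Tendsto (fun n : ℕ => 1 / ((n : ℝ) + 1)) Filter.atTop (nhds 0) :=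
        tendsto_one_div_add_atTop_nhds_zero_nat
      simpa [hu] using (tendsto_const_nhds (x := α x)).add this
    have h2 : Filter.Tendsto (fun n => (⟨u n, hupos n⟩ : Set.Ioi (0:ℝ)))
        Filter.atTop (nhds ⟨α x, hαpos⟩) := by
      rw [tendsto_subtype_rng]
      exact h1
    have h3 : Filter.Tendsto (fun n => ((⟨u n, hupos n⟩ : Set.Ioi (0:ℝ)), Ξ x))
        Filter.atTop (nhds (⟨α x, hαpos⟩, Ξ x)) := h2.prodMk_nhds tendsto_const_nhds
    have h4 := (h.symm.continuous.tendsto _).comp h3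
    have hxeq : h.symm (⟨α x, hαpos⟩, Ξ x) = x := by
      have : h x = (⟨α x, hαpos⟩, Ξ x) := by
        rw [hΞ]
        exact Prod.ext (Subtype.ext (hα x).symm) rfl
      rw [← this]; exact h.symm_apply_apply x
    rw [hxeq] at h4
    exact hS.mem_of_tendsto h4 (Filter.Eventually.of_forall hmem)
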